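/- arXiv:0804.0405 — 2 statements merged into one kernel-verified Lean document; each statement's English description precedes it below -/
import Mathlib

section
/- Let n ≥ 2, K ∈ 𝒦, let f : ℝ^{n−1} → ℝ be Lipschitz, let L > max{1, Lip(f)}, and let ν ∈ Δ satisfy ν(H_f^+ ∪ C_f) = 0. Then there is a constant C_N, depending only on n, L and the constants C₀, C₁ of K, such that for every g ∈ L¹(ν) and every x ∈ C_f: N(T*_{ν,K} g)(x) ≤ C_N (T*_{ν,K} g(x) + M_ν g(x)), where N(h)(x) = sup{|h(y)| : y ∈ Γ(x)} and M_ν g(x) = sup_{r>0} r^{1−n} ∫_{B(x,r)} |g| dν. -/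
open MeasureTheory Metric ENNReal Filter Set Topology

noncomputable section
set_option maxHeartbeats 1000000

/-- Projection of a point of `ℝ^(m+1)` onto its first `m` coordinates. -/
def proj {m : ℕ} (p : EuclideanSpace ℝ (Fin (m + 1))) : EuclideanSpace ℝ (Fin m) :=
  WithLp.toLp 2 (fun i : Fin m => p i.castSucc)

/-- The graph `C_f` of `f : ℝ^m → ℝ`, as a subset of `ℝ^(m+1)`. -/
def graphSet {m : ℕ} (f : EuclideanSpace ℝ (Fin m) → ℝ) :
    Set (EuclideanSpace ℝ (Fin (m + 1))) :=
  {p | p (Fin.last m) = f (proj p)}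

/-- The open region `H_f^+` above the graph of `f`. -/
def upperSet {m : ℕ} (f : EuclideanSpace ℝ (Fin m) → ℝ) :
    Set (EuclideanSpace ℝ (Fin (m + 1))) :=
  {p | f (proj p) < p (Fin.last m)}

/-- The cone `Γ((u₀, f u₀)) = {(u,t) : t - f u₀ > 4 L |u - u₀|}`. -/
def cone {m : ℕ} (f : EuclideanSpace ℝ (Fin m) → ℝ) (L : ℝ)
    (u₀ : EuclideanSpace ℝ (Fin m)) : Set (EuclideanSpace ℝ (Fin (m + 1))) :=
  {p | 4 * L * ‖proj p - u₀‖ < p (Fin.last m) - f u₀}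

/-- The truncated singular integral operator `T^ε_{ν,K}`. -/
def trunc {n : ℕ} (ν : Measure (EuclideanSpace ℝ (Fin n)))
    (K : EuclideanSpace ℝ (Fin n) → ℝ) (ε : ℝ)
    (g : EuclideanSpace ℝ (Fin n) → ℝ) (x : EuclideanSpace ℝ (Fin n)) : ℝ :=
  ∫ y in (closedBall x ε)ᶜ, K (x - y) * g y ∂ν

/-- The maximal singular integral operator `T^*_{ν,K}` (with values in `ℝ≥0∞`). -/
def maximalOp {n : ℕ} (ν : Measure (EuclideanSpace ℝ (Fin n)))
    (K : EuclideanSpace ℝ (Fin n) → ℝ)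
    (g : EuclideanSpace ℝ (Fin n) → ℝ) (x : EuclideanSpace ℝ (Fin n)) : ℝ≥0∞ :=
  ⨆ (ε : ℝ) (_ : 0 < ε), ENNReal.ofReal |trunc ν K ε g x|

/-- The maximal function `M_ν g(x) = sup_{ρ>0} ρ^{1-n} ∫_{B(x,ρ)} |g| dν` (here `n = m + 1`,
so `1 - n = -m`). -/
def radialMax {m : ℕ} (ν : Measure (EuclideanSpace ℝ (Fin (m + 1))))
    (g : EuclideanSpace ℝ (Fin (m + 1)) → ℝ)
    (x : EuclideanSpace ℝ (Fin (m + 1))) : ℝ≥0∞ :=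
  ⨆ (ρ : ℝ) (_ : 0 < ρ),
    ENNReal.ofReal (ρ ^ (-(m : ℝ))) * ∫⁻ y in closedBall x ρ, ENNReal.ofReal |g y| ∂ν


lemma proj_sub {m : ℕ} (p q : EuclideanSpace ℝ (Fin (m + 1))) :
    proj (p - q) = proj p - proj q := by
  ext i; simp [proj]

lemma norm_split {m : ℕ} (p : EuclideanSpace ℝ (Fin (m + 1))) :
    ‖p‖ = Real.sqrt (‖proj p‖ ^ 2 + (p (Fin.last m)) ^ 2) := by
  have hp : ‖proj p‖ ^ 2 = ∑ i : Fin m, ‖p i.castSucc‖ ^ 2 := by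
    rw [EuclideanSpace.norm_eq, Real.sq_sqrt (by positivity)]; rfl
  rw [EuclideanSpace.norm_eq p, Fin.sum_univ_castSucc (f := fun j => ‖p j‖ ^ 2), hp]
  congr 1
  simp [sq_abs]

lemma abs_last_le_norm {m : ℕ} (p : EuclideanSpace ℝ (Fin (m + 1))) :
    |p (Fin.last m)| ≤ ‖p‖ := by
  rw [norm_split p, ← Real.sqrt_sq_eq_abs]
  exact Real.sqrt_le_sqrt (by nlinarith [sq_nonneg ‖proj p‖])

lemma norm_proj_le_norm {m : ℕ} (p : EuclideanSpace ℝ (Fin (m + 1))) :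
    ‖proj p‖ ≤ ‖p‖ := by
  rw [norm_split p]
  rw [show ‖proj p‖ = Real.sqrt (‖proj p‖ ^ 2) from (Real.sqrt_sq (norm_nonneg _)).symm]
  exact Real.sqrt_le_sqrt (by nlinarith [sq_nonneg (p (Fin.last m)), Real.sq_sqrt (sq_nonneg ‖proj p‖)])

lemma norm_le_proj_add {m : ℕ} (p : EuclideanSpace ℝ (Fin (m + 1))) :
    ‖p‖ ≤ ‖proj p‖ + |p (Fin.last m)| := by
  rw [norm_split p]
  have h : ‖proj p‖ ^ 2 + (p (Fin.last m)) ^ 2 ≤ (‖proj p‖ + |p (Fin.last m)|) ^ 2 := by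
    nlinarith [norm_nonneg (proj p), abs_nonneg (p (Fin.last m)), sq_abs (p (Fin.last m))]
  calc Real.sqrt (‖proj p‖ ^ 2 + (p (Fin.last m)) ^ 2)
      ≤ Real.sqrt ((‖proj p‖ + |p (Fin.last m)|) ^ 2) := Real.sqrt_le_sqrt h
    _ = ‖proj p‖ + |p (Fin.last m)| := Real.sqrt_sq (by positivity)

lemma sub_last {m : ℕ} (p q : EuclideanSpace ℝ (Fin (m + 1))) :
    (p - q) (Fin.last m) = p (Fin.last m) - q (Fin.last m) := rfl

lemma geom_lemma {m : ℕ} {f : EuclideanSpace ℝ (Fin m) → ℝ} {Lf : NNReal}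
    (hf : LipschitzWith Lf f) {L : ℝ} (hL1 : 1 < L) (hLf : (Lf : ℝ) ≤ L)
    {x y z : EuclideanSpace ℝ (Fin (m + 1))}
    (hx : x (Fin.last m) = f (proj x)) (hy : y ∈ cone f L (proj x))
    (hz : z (Fin.last m) < f (proj z)) : ‖y - x‖ ≤ 8 * L * ‖y - z‖ := by
  set u₀ := proj x with hu₀
  set u := proj y with hu
  set v := proj z with hv
  set t := y (Fin.last m) with ht
  set s := z (Fin.last m) with hs
  have hy' : 4 * L * ‖u - u₀‖ < t - f u₀ := hy
  set h := t - f u₀ with hh'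
  have hL0 : (0:ℝ) < L := lt_trans one_pos hL1
  have hh : 0 < h := lt_of_le_of_lt (by positivity) hy'
  have huu : ‖u - u₀‖ < h / (4 * L) := by
    rw [lt_div_iff₀ (by positivity)]; linarith [hy']
  have hd : ‖y - x‖ ≤ ‖u - u₀‖ + h := by
    have h1 := norm_le_proj_add (y - x)
    rw [proj_sub, sub_last] at h1
    rw [← hu, ← hu₀, ← ht, hx] at h1
    rw [show |t - f u₀| = h from abs_of_pos hh] at h1
    exact h1
  have hd2 : ‖y - x‖ ≤ 2 * h := by
    have : h / (4 * L) ≤ h := by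
      rw [div_le_iff₀ (by positivity)]; nlinarith
    linarith
  by_cases hcase : h / (4 * L) ≤ ‖v - u‖
  · have h1 : ‖u - v‖ ≤ ‖y - z‖ := by
      have := norm_proj_le_norm (y - z); rwa [proj_sub, ← hu, ← hv] at this
    rw [norm_sub_rev] at h1
    have : h / (4 * L) ≤ ‖y - z‖ := le_trans hcase h1
    rw [div_le_iff₀ (by positivity)] at this
    nlinarith
  · push_neg at hcase
    have hvu₀ : ‖v - u₀‖ < h / (2 * L) := by
      have htr : ‖v - u₀‖ ≤ ‖v - u‖ + ‖u - u₀‖ := by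
        have := dist_triangle v u u₀
        simpa [dist_eq_norm] using this
      have : h / (4 * L) + h / (4 * L) = h / (2 * L) := by ring
      linarith
    have hfv : |f v - f u₀| ≤ L * ‖v - u₀‖ := by
      have := hf.dist_le_mul v u₀
      rw [Real.dist_eq, dist_eq_norm] at this
      calc |f v - f u₀| ≤ (Lf : ℝ) * ‖v - u₀‖ := this
        _ ≤ L * ‖v - u₀‖ := by nlinarith [norm_nonneg (v - u₀)]
    have hts : h / 2 < t - s := by
      have h2 : L * ‖v - u₀‖ < h / 2 := by
        have := mul_lt_mul_of_pos_left hvu₀ hL0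
        calc L * ‖v - u₀‖ < L * (h / (2 * L)) := this
          _ = h / 2 := by field_simp
      have : t - f v ≥ h - L * ‖v - u₀‖ := by
        have := abs_le.mp hfv
        simp only [hh']; linarith [this.2]
      linarith
    have h1 : t - s ≤ ‖y - z‖ := by
      have := abs_last_le_norm (y - z)
      rw [sub_last, ← ht, ← hs] at this
      exact le_trans (le_abs_self _) this
    nlinarith

/-- If `K ∈ 𝒦`, `f` is Lipschitz, `L > max{1, Lip f}` and `ν ∈ Δ` vanishes on
`H_f^+ ∪ C_f`, then there is a constant `C_N` such that for every `g ∈ L¹(ν)` and `x ∈ C_f`,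
`N(T^*_ν g)(x) ≤ C_N (T^*_ν g(x) + M_ν g(x))`. -/
theorem statement9 (m : ℕ) (hm : 1 ≤ m)
    (K : EuclideanSpace ℝ (Fin (m + 1)) → ℝ) (C₀ C₁ : ℝ)
    (hK_diff : ContDiffOn ℝ 1 K {0}ᶜ)
    (hK_anti : ∀ x : EuclideanSpace ℝ (Fin (m + 1)), x ≠ 0 → K (-x) = -K x)
    (hK_size : ∀ x : EuclideanSpace ℝ (Fin (m + 1)), x ≠ 0 →
      |K x| ≤ C₀ * ‖x‖ ^ (-(m : ℝ)))
    (hK_grad : ∀ x : EuclideanSpace ℝ (Fin (m + 1)), x ≠ 0 →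
      ‖fderiv ℝ K x‖ ≤ C₁ * ‖x‖ ^ (-(m : ℝ) - 1))
    (f : EuclideanSpace ℝ (Fin m) → ℝ) (Lf : NNReal) (hf : LipschitzWith Lf f)
    (L : ℝ) (hL : max 1 (Lf : ℝ) < L)
    (ν : Measure (EuclideanSpace ℝ (Fin (m + 1)))) [IsFiniteMeasure ν]
    (Cν : ℝ)
    (hνΔ : ∀ (x : EuclideanSpace ℝ (Fin (m + 1))) (r : ℝ), 0 < r →
      ν (closedBall x r) ≤ ENNReal.ofReal (Cν * r ^ m))
    (hνside : ν (upperSet f ∪ graphSet f) = 0) :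
    ∃ CN : ℝ≥0∞, CN ≠ ∞ ∧
      ∀ g : EuclideanSpace ℝ (Fin (m + 1)) → ℝ, Integrable g ν →
        ∀ x ∈ graphSet f,
          (⨆ y ∈ cone f L (proj x), maximalOp ν K g y) ≤
            CN * (maximalOp ν K g x + radialMax ν g x) := by
  
  have hL1 : 1 < L := lt_of_le_of_lt (le_max_left _ _) hL
  have hLf : (Lf : ℝ) ≤ L := le_of_lt (lt_of_le_of_lt (le_max_right _ _) hL)
  have hL0 : (0:ℝ) < L := lt_trans one_pos hL1
  -- a nonzero vector of norm 1
  have hw : ∃ w : EuclideanSpace ℝ (Fin (m+1)), w ≠ 0 ∧ ‖w‖ = 1 := by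
    refine ⟨EuclideanSpace.single (Fin.last m) (1:ℝ), ?_, ?_⟩
    · intro h
      have := congrArg (· (Fin.last m)) h
      simp [EuclideanSpace.single_apply] at this
    · rw [EuclideanSpace.norm_single]; norm_num
  obtain ⟨w, hw0, hw1⟩ := hw
  have hC₀ : 0 ≤ C₀ := by
    have := hK_size w hw0
    rw [hw1, Real.one_rpow] at this
    have h0 := abs_nonneg (K w); linarith
  have hC₁ : 0 ≤ C₁ := by
    have := hK_grad w hw0
    rw [hw1, Real.one_rpow] at this
    have h0 := norm_nonneg (fderiv ℝ K w); linarith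
  have hKsize' : ∀ p : EuclideanSpace ℝ (Fin (m+1)), p ≠ 0 → |K p| ≤ C₀ * (‖p‖ ^ m)⁻¹ := by
    intro p hp
    have := hK_size p hp
    rwa [Real.rpow_neg (norm_nonneg _), Real.rpow_natCast] at this
  have hKgrad' : ∀ p : EuclideanSpace ℝ (Fin (m+1)), p ≠ 0 →
      ‖fderiv ℝ K p‖ ≤ C₁ * (‖p‖ ^ (m+1))⁻¹ := by
    intro p hp
    have := hK_grad p hp
    have he : (-(m:ℝ) - 1) = -(((m+1:ℕ)):ℝ) := by push_cast; ring
    rwa [he, Real.rpow_neg (norm_nonneg _), Real.rpow_natCast] at this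
  have hK_cont : ContinuousOn K {0}ᶜ := hK_diff.continuousOn
  -- a.e. below graph
  have hae : ∀ᵐ z ∂ν, z (Fin.last m) < f (proj z) := by
    rw [ae_iff]
    refine measure_mono_null ?_ hνside
    intro z hz
    simp only [mem_setOf_eq, not_lt] at hz
    rcases lt_or_eq_of_le hz with h | h
    · exact Or.inl h
    · exact Or.inr h.symm
  refine ⟨1 + ENNReal.ofReal (C₀ * (32*L)^m) + ENNReal.ofReal (C₁ * 2^(m+1) * 2^(m+1)),
    by finiteness, ?_⟩
  intro g hg x hx
  set A₀ : ℝ≥0∞ := ENNReal.ofReal (C₀ * (32*L)^m) with hA₀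
  set A₁ : ℝ≥0∞ := ENNReal.ofReal (C₁ * 2^(m+1) * 2^(m+1)) with hA₁
  set M := radialMax ν g x with hM
  set T := maximalOp ν K g x with hT
  -- maximal function bounds
  have hM' : ∀ ρ : ℝ, 0 < ρ →
      ENNReal.ofReal ((ρ^m)⁻¹) * ∫⁻ z in closedBall x ρ, ENNReal.ofReal |g z| ∂ν ≤ M := by
    intro ρ hρ
    have he : ENNReal.ofReal ((ρ^m)⁻¹) = ENNReal.ofReal (ρ ^ (-(m:ℝ))) := by
      rw [Real.rpow_neg (le_of_lt hρ), Real.rpow_natCast]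
    rw [he, hM, radialMax]
    exact le_iSup₂ (f := fun ρ (_ : 0 < ρ) =>
      ENNReal.ofReal (ρ ^ (-(m : ℝ))) * ∫⁻ z in closedBall x ρ, ENNReal.ofReal |g z| ∂ν) ρ hρ
  have hMb : ∀ ρ : ℝ, 0 < ρ →
      (∫⁻ z in closedBall x ρ, ENNReal.ofReal |g z| ∂ν) ≤ ENNReal.ofReal (ρ^m) * M := by
    intro ρ hρ
    have h2 : (∫⁻ z in closedBall x ρ, ENNReal.ofReal |g z| ∂ν)
        = ENNReal.ofReal (ρ^m) * (ENNReal.ofReal ((ρ^m)⁻¹) *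
          ∫⁻ z in closedBall x ρ, ENNReal.ofReal |g z| ∂ν) := by
      rw [← mul_assoc, ← ENNReal.ofReal_mul (by positivity),
        mul_inv_cancel₀ (by positivity), ENNReal.ofReal_one, one_mul]
    rw [h2]
    exact mul_le_mul_right (hM' ρ hρ) _
  -- integrability of truncated kernels
  have hInt : ∀ (p : EuclideanSpace ℝ (Fin (m+1))) (δ : ℝ), 0 < δ →
      IntegrableOn (fun z => K (p - z) * g z) (closedBall p δ)ᶜ ν := by
    intro p δ hδ
    have hmeas : AEStronglyMeasurable (fun z => K (p - z) * g z)
        (ν.restrict (closedBall p δ)ᶜ) := by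
      refine AEStronglyMeasurable.mul ?_ (hg.1.restrict)
      refine ContinuousOn.aestronglyMeasurable ?_ measurableSet_closedBall.compl
      refine hK_cont.comp (Continuous.continuousOn (by continuity)) ?_
      intro z hz
      simp only [mem_compl_iff, mem_closedBall, not_le, dist_eq_norm] at hz
      simp only [mem_compl_iff, mem_singleton_iff]
      intro h0
      rw [show p - z = -(z - p) by abel] at h0
      have : ‖z - p‖ = 0 := by
        rw [← norm_neg]; rw [h0]; simp
      linarith
    refine Integrable.mono' ((hg.norm.const_mul (C₀ * (δ^m)⁻¹)).restrict) hmeas ?_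
    refine (ae_restrict_mem measurableSet_closedBall.compl).mono ?_
    intro z hz
    simp only [mem_compl_iff, mem_closedBall, not_le, dist_eq_norm] at hz
    have hzp : ‖p - z‖ > δ := by rwa [norm_sub_rev]
    have hne : p - z ≠ 0 := by
      intro h0; rw [h0, norm_zero] at hzp; linarith
    have h1 : |K (p - z)| ≤ C₀ * (δ^m)⁻¹ := by
      refine le_trans (hKsize' _ hne) ?_
      have : (‖p - z‖^m)⁻¹ ≤ (δ^m)⁻¹ := by
        apply inv_anti₀ (by positivity)
        exact pow_le_pow_left₀ (le_of_lt hδ) (le_of_lt hzp) m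
      nlinarith
    calc ‖K (p - z) * g z‖ = |K (p - z)| * |g z| := by
          rw [norm_mul, Real.norm_eq_abs, Real.norm_eq_abs]
      _ ≤ (C₀ * (δ^m)⁻¹) * |g z| := by
          apply mul_le_mul_of_nonneg_right h1 (abs_nonneg _)
      _ = C₀ * (δ^m)⁻¹ * ‖g z‖ := by rw [Real.norm_eq_abs]
  -- the key estimate
  refine iSup₂_le fun y hy => ?_
  have hgeom : ∀ z, z (Fin.last m) < f (proj z) → ‖y - x‖ ≤ 8 * L * ‖y - z‖ :=
    fun z hz => geom_lemma hf hL1 hLf hx hy hz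
  refine iSup₂_le fun ε hε => ?_
  set d := ‖y - x‖ with hd
  have hd0 : 0 ≤ d := norm_nonneg _
  set ε' : ℝ := 2 * (d + ε) with hε'def
  have hε' : 0 < ε' := by positivity
  clear_value ε'
  set F := Set.indicator (closedBall y ε)ᶜ (fun z => K (y - z) * g z) with hF
  set G := Set.indicator (closedBall x ε')ᶜ (fun z => K (x - z) * g z) with hG
  have hFint : Integrable F ν :=
    (hInt y ε hε).integrable_indicator measurableSet_closedBall.compl
  have hGint : Integrable G ν :=
    (hInt x ε' hε').integrable_indicator measurableSet_closedBall.compl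
  have htr1 : trunc ν K ε g y = ∫ z, F z ∂ν := by
    rw [hF, integral_indicator measurableSet_closedBall.compl]; rfl
  have htr2 : trunc ν K ε' g x = ∫ z, G z ∂ν := by
    rw [hG, integral_indicator measurableSet_closedBall.compl]; rfl
  have hsplit : ENNReal.ofReal |trunc ν K ε g y| ≤
      ENNReal.ofReal |trunc ν K ε' g x| + ∫⁻ z, ENNReal.ofReal |F z - G z| ∂ν := by
    have h1 : trunc ν K ε g y = trunc ν K ε' g x + ∫ z, (F z - G z) ∂ν := by
      rw [htr1, htr2, integral_sub hFint hGint]; ring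
    have h2 : |trunc ν K ε g y| ≤ |trunc ν K ε' g x| + |∫ z, (F z - G z) ∂ν| := by
      rw [h1]; exact abs_add_le _ _
    refine le_trans (ENNReal.ofReal_le_ofReal h2) ?_
    refine le_trans (ENNReal.ofReal_add_le) ?_
    refine add_le_add_right ?_ _
    have h3 : |∫ z, (F z - G z) ∂ν| ≤ ∫ z, |F z - G z| ∂ν := by
      simpa [Real.norm_eq_abs] using norm_integral_le_integral_norm (fun z => F z - G z)
    refine le_trans (ENNReal.ofReal_le_ofReal h3) ?_
    have habs : Integrable (fun z => |F z - G z|) ν := by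
      have := (hFint.sub hGint).abs
      simpa using this
    rw [ofReal_integral_eq_lintegral_ofReal habs
      (Eventually.of_forall fun z => abs_nonneg _)]
  -- split into near and far parts
  have hdecomp : (∫⁻ z, ENNReal.ofReal |F z - G z| ∂ν) =
      (∫⁻ z in closedBall x ε', ENNReal.ofReal |F z - G z| ∂ν) +
      (∫⁻ z in (closedBall x ε')ᶜ, ENNReal.ofReal |F z - G z| ∂ν) :=
    (lintegral_add_compl _ measurableSet_closedBall).symm
  -- NEAR PART
  have hnear : (∫⁻ z in closedBall x ε', ENNReal.ofReal |F z - G z| ∂ν) ≤ A₀ * M := by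
    have hc0 : 0 ≤ C₀ * (32*L)^m := mul_nonneg hC₀ (by positivity)
    have hpt : ∀ᵐ z ∂(ν.restrict (closedBall x ε')),
        ENNReal.ofReal |F z - G z| ≤
          ENNReal.ofReal (C₀ * (32*L)^m * (ε'^m)⁻¹) * ENNReal.ofReal |g z| := by
      filter_upwards [ae_restrict_mem measurableSet_closedBall, ae_restrict_of_ae hae]
        with z hzB hzS
      have hG0 : G z = 0 := by
        rw [hG]; exact Set.indicator_of_notMem (Set.notMem_compl_iff.mpr hzB) _
      rw [hG0, sub_zero]
      have hcpos : (0:ℝ) < ε' / (32*L) := div_pos hε' (by positivity)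
      have hcnn : 0 ≤ C₀ * (32*L)^m * (ε'^m)⁻¹ := by
        apply mul_nonneg hc0
        have : (0:ℝ) < ε'^m := pow_pos hε' m
        positivity
      have hbound : |F z| ≤ C₀*(32*L)^m*(ε'^m)⁻¹ * |g z| := by
        by_cases hzF : z ∈ (closedBall y ε)ᶜ
        · rw [hF, Set.indicator_of_mem hzF]
          have hyz : ε < ‖y - z‖ := by
            simp only [mem_compl_iff, mem_closedBall, not_le, dist_eq_norm] at hzF
            rwa [norm_sub_rev]
          have hdz : d ≤ 8*L*‖y-z‖ := hgeom z hzS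
          have hlow : ε' / (32*L) ≤ ‖y - z‖ := by
            rw [div_le_iff₀ (by positivity : (0:ℝ) < 32*L)]
            rw [hε'def]
            nlinarith [norm_nonneg (y - z)]
          have hne : y - z ≠ 0 := by
            intro h0; rw [h0, norm_zero] at hlow; linarith
          have h1 := hKsize' _ hne
          have h2 : (‖y - z‖^m)⁻¹ ≤ ((ε'/(32*L))^m)⁻¹ :=
            inv_anti₀ (pow_pos hcpos m)
              (pow_le_pow_left₀ (le_of_lt hcpos) hlow m)
          have h3 : ((ε'/(32*L))^m)⁻¹ = (32*L)^m * (ε'^m)⁻¹ := by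
            rw [div_pow]
            rw [inv_div]
            rw [div_eq_mul_inv]
          calc |K (y-z) * g z| = |K (y - z)| * |g z| := abs_mul _ _
            _ ≤ (C₀ * (32*L)^m * (ε'^m)⁻¹) * |g z| := by
                refine mul_le_mul_of_nonneg_right ?_ (abs_nonneg _)
                calc |K (y-z)| ≤ C₀ * (‖y-z‖^m)⁻¹ := h1
                  _ ≤ C₀ * ((ε'/(32*L))^m)⁻¹ := by nlinarith
                  _ = C₀ * (32*L)^m * (ε'^m)⁻¹ := by rw [h3]; ring
        · rw [hF, Set.indicator_of_notMem hzF]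
          simp only [abs_zero]
          exact mul_nonneg hcnn (abs_nonneg _)
      calc ENNReal.ofReal |F z| ≤ ENNReal.ofReal (C₀*(32*L)^m*(ε'^m)⁻¹ * |g z|) :=
            ENNReal.ofReal_le_ofReal hbound
        _ = ENNReal.ofReal (C₀*(32*L)^m*(ε'^m)⁻¹) * ENNReal.ofReal |g z| :=
            ENNReal.ofReal_mul hcnn
    refine le_trans (lintegral_mono_ae hpt) ?_
    rw [lintegral_const_mul' _ _ ENNReal.ofReal_ne_top]
    have he : ENNReal.ofReal (C₀*(32*L)^m*(ε'^m)⁻¹) =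
        A₀ * ENNReal.ofReal ((ε'^m)⁻¹) := by
      rw [hA₀, ← ENNReal.ofReal_mul hc0]
    rw [he, mul_assoc]
    exact mul_le_mul_right (hM' ε' hε') _
  -- FAR PART
  have hfar : (∫⁻ z in (closedBall x ε')ᶜ, ENNReal.ofReal |F z - G z| ∂ν) ≤ A₁ * M := by
    set c₁ : ℝ := C₁ * 2^(m+1) * d with hc₁
    have hc₁0 : 0 ≤ c₁ := mul_nonneg (mul_nonneg hC₁ (by positivity)) hd0
    -- pointwise gradient bound on the far region
    have hpt : ∀ᵐ z ∂(ν.restrict (closedBall x ε')ᶜ),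
        ENNReal.ofReal |F z - G z| ≤ ENNReal.ofReal c₁ *
          (ENNReal.ofReal ((‖x - z‖^(m+1))⁻¹) * ENNReal.ofReal |g z|) := by
      filter_upwards [ae_restrict_mem measurableSet_closedBall.compl, ae_restrict_of_ae hae]
        with z hzB hzS
      have hxz : ε' < ‖x - z‖ := by
        simp only [mem_compl_iff, mem_closedBall, not_le, dist_eq_norm] at hzB
        rwa [norm_sub_rev]
      have hzG : G z = K (x - z) * g z := by
        rw [hG]
        refine Set.indicator_of_mem ?_ _
        simp only [mem_compl_iff, mem_closedBall, not_le, dist_eq_norm]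
        rwa [norm_sub_rev] at hxz
      have htri : ‖x - z‖ ≤ d + ‖y - z‖ := by
        calc ‖x - z‖ ≤ ‖x - y‖ + ‖y - z‖ := by
              have := dist_triangle x y z
              simpa [dist_eq_norm] using this
          _ = d + ‖y - z‖ := by rw [norm_sub_rev x y]
      have hyz : ε < ‖y - z‖ := by
        have : ε' = 2*(d + ε) := hε'def
        linarith
      have hzF : F z = K (y - z) * g z := by
        rw [hF]
        refine Set.indicator_of_mem ?_ _
        simp only [mem_compl_iff, mem_closedBall, not_le, dist_eq_norm]
        rwa [norm_sub_rev] at hyz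
      rw [hzF, hzG]
      have hMVT : |K (y - z) - K (x - z)| ≤ c₁ * (‖x - z‖^(m+1))⁻¹ := by
        set a := x - z with ha
        set b := y - z with hb
        have hba : b - a = y - x := sub_sub_sub_cancel_right y x z
        have hnba : ‖b - a‖ = d := by rw [hba]
        have ha2 : 2 * d ≤ ‖a‖ := by
          have : ε' = 2*(d + ε) := hε'def
          linarith
        have hpos : (0:ℝ) < ‖a‖/2 := by linarith
        have hseg : ∀ p ∈ segment ℝ a b, ‖a‖/2 ≤ ‖p‖ := by
          intro p hp
          obtain ⟨σ, τ, hσ, hτ, hστ, hpe⟩ := hp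
          have hpa : p - a = τ • (b - a) := by
            rw [← hpe]
            have hσ1 : σ = 1 - τ := by linarith
            rw [hσ1]
            module
          have hpa2 : ‖p - a‖ ≤ d := by
            rw [hpa, norm_smul, hnba, Real.norm_eq_abs, abs_of_nonneg hτ]
            have hτ1 : τ ≤ 1 := by linarith
            nlinarith
          have h5 : ‖a‖ - ‖p‖ ≤ ‖a - p‖ := norm_sub_norm_le a p
          rw [norm_sub_rev a p] at h5
          linarith
        have hne : ∀ p ∈ segment ℝ a b, p ≠ 0 := by
          intro p hp h0
          have := hseg p hp
          rw [h0, norm_zero] at this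
          linarith
        have hderiv : ∀ p ∈ segment ℝ a b,
            HasFDerivWithinAt K (fderiv ℝ K p) (segment ℝ a b) p := by
          intro p hp
          have hd : DifferentiableAt ℝ K p := by
            refine (hK_diff.contDiffAt (IsOpen.mem_nhds isOpen_compl_singleton ?_)).differentiableAt one_ne_zero
            simpa using hne p hp
          exact hd.hasFDerivAt.hasFDerivWithinAt
        have hbd : ∀ p ∈ segment ℝ a b, ‖fderiv ℝ K p‖ ≤ C₁ * ((‖a‖/2)^(m+1))⁻¹ := by
          intro p hp
          refine le_trans (hKgrad' p (hne p hp)) ?_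
          have h6 : ((‖p‖)^(m+1))⁻¹ ≤ ((‖a‖/2)^(m+1))⁻¹ :=
            inv_anti₀ (pow_pos hpos _)
              (pow_le_pow_left₀ (le_of_lt hpos) (hseg p hp) _)
          nlinarith
        have hmvt := Convex.norm_image_sub_le_of_norm_hasFDerivWithin_le hderiv hbd
          (convex_segment a b) (left_mem_segment ℝ a b) (right_mem_segment ℝ a b)
        rw [hba] at hmvt
        have heq : ((‖a‖/2)^(m+1))⁻¹ = 2^(m+1) * (‖a‖^(m+1))⁻¹ := by
          rw [div_pow, inv_div, div_eq_mul_inv]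
        calc |K b - K a| ≤ C₁*((‖a‖/2)^(m+1))⁻¹ * d := by
              simpa [Real.norm_eq_abs] using hmvt
          _ = c₁ * (‖a‖^(m+1))⁻¹ := by rw [heq, hc₁]; ring
      have habs : |K (y-z) * g z - K (x-z) * g z| = |K (y-z) - K (x-z)| * |g z| := by
        rw [← sub_mul, abs_mul]
      rw [habs]
      have hinv : (0:ℝ) ≤ (‖x - z‖^(m+1))⁻¹ := by positivity
      calc ENNReal.ofReal (|K (y-z) - K (x-z)| * |g z|)
          ≤ ENNReal.ofReal (c₁ * (‖x - z‖^(m+1))⁻¹ * |g z|) :=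
            ENNReal.ofReal_le_ofReal
              (mul_le_mul_of_nonneg_right hMVT (abs_nonneg _))
        _ = ENNReal.ofReal c₁ * (ENNReal.ofReal ((‖x - z‖^(m+1))⁻¹) * ENNReal.ofReal |g z|) := by
            rw [ENNReal.ofReal_mul (mul_nonneg hc₁0 hinv), ENNReal.ofReal_mul hc₁0, mul_assoc]
    refine le_trans (lintegral_mono_ae hpt) ?_
    rw [lintegral_const_mul' _ _ ENNReal.ofReal_ne_top]
    -- dyadic decomposition
    set W : EuclideanSpace ℝ (Fin (m+1)) → ℝ≥0∞ := fun z =>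
      ENNReal.ofReal ((‖x - z‖^(m+1))⁻¹) * ENNReal.ofReal |g z| with hW
    set D : ℕ → Set (EuclideanSpace ℝ (Fin (m+1))) := fun k =>
      closedBall x (2^(k+1) * ε') \ ball x (2^k * ε') with hD
    have hcover : (closedBall x ε')ᶜ ⊆ ⋃ k, D k := by
      intro z hz
      have hxz : ε' < dist z x := by
        simpa [mem_compl_iff, mem_closedBall, not_le] using hz
      obtain ⟨k, hk1, hk2⟩ : ∃ k : ℕ, 2^k * ε' ≤ dist z x ∧ dist z x ≤ 2^(k+1) * ε' := by
        have hex : ∃ n : ℕ, dist z x / ε' < 2^n :=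
          pow_unbounded_of_one_lt _ one_lt_two
        have hn : dist z x / ε' < 2^(Nat.find hex) := Nat.find_spec hex
        have hn0 : Nat.find hex ≠ 0 := by
          intro h
          rw [h, pow_zero] at hn
          rw [div_lt_one hε'] at hn
          linarith
        refine ⟨Nat.find hex - 1, ?_, ?_⟩
        · have hmin := Nat.find_min hex (Nat.pred_lt hn0)
          push_neg at hmin
          calc (2:ℝ)^(Nat.find hex - 1) * ε' ≤ (dist z x / ε') * ε' := by
                apply mul_le_mul_of_nonneg_right hmin (le_of_lt hε')
            _ = dist z x := by field_simp
        · have hsucc : Nat.find hex - 1 + 1 = Nat.find hex :=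
            Nat.succ_pred_eq_of_ne_zero hn0
          rw [hsucc]
          rw [div_lt_iff₀ hε'] at hn
          linarith
      refine mem_iUnion.mpr ⟨k, ?_, ?_⟩
      · exact mem_closedBall.mpr hk2
      · simp only [mem_ball, not_lt]
        exact hk1
    have hsum : (∫⁻ z in (closedBall x ε')ᶜ, W z ∂ν) ≤ ∑' k, ∫⁻ z in D k, W z ∂ν :=
      le_trans (lintegral_mono_set hcover) (lintegral_iUnion_le _ _)
    have hterm : ∀ k : ℕ, (∫⁻ z in D k, W z ∂ν) ≤
        (ENNReal.ofReal (2^m * ε'⁻¹) * M) * (2⁻¹:ℝ≥0∞)^k := by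
      intro k
      have hPk : (0:ℝ) < 2^k * ε' := mul_pos (pow_pos two_pos k) hε'
      have hPk1 : (0:ℝ) < 2^(k+1) * ε' := mul_pos (pow_pos two_pos (k+1)) hε'
      have hpt2 : ∀ᵐ z ∂(ν.restrict (D k)),
          W z ≤ ENNReal.ofReal (((2^k * ε')^(m+1))⁻¹) * ENNReal.ofReal |g z| := by
        filter_upwards [ae_restrict_mem (measurableSet_closedBall.diff measurableSet_ball)]
          with z hz
        obtain ⟨hz1, hz2⟩ := hz
        have h2 : 2^k * ε' ≤ dist z x := by
          simpa [mem_ball, not_lt] using hz2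
        have h7 : ((‖x - z‖)^(m+1))⁻¹ ≤ ((2^k*ε')^(m+1))⁻¹ := by
          refine inv_anti₀ (pow_pos hPk _) ?_
          refine pow_le_pow_left₀ (le_of_lt hPk) ?_ _
          rwa [norm_sub_rev, ← dist_eq_norm]
        exact mul_le_mul_left (ENNReal.ofReal_le_ofReal h7) _
      refine le_trans (lintegral_mono_ae hpt2) ?_
      rw [lintegral_const_mul' _ _ ENNReal.ofReal_ne_top]
      have hsub : D k ⊆ closedBall x (2^(k+1) * ε') := diff_subset
      have h3 : (∫⁻ z in D k, ENNReal.ofReal |g z| ∂ν) ≤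
          ENNReal.ofReal ((2^(k+1)*ε')^m) * M :=
        le_trans (lintegral_mono_set hsub) (hMb _ hPk1)
      have hinvnn : (0:ℝ) ≤ ((2^k*ε')^(m+1))⁻¹ := by positivity
      have hreal : ((2^k*ε')^(m+1))⁻¹ * (2^(k+1)*ε')^m = (2^m * ε'⁻¹) * ((1:ℝ)/2)^k := by
        have h2k : ((2:ℝ)^k) ≠ 0 := by positivity
        have hen : ε' ≠ 0 := ne_of_gt hε'
        rw [pow_succ (2:ℝ) k, one_div_pow]
        field_simp
        ring
      calc ENNReal.ofReal (((2^k*ε')^(m+1))⁻¹) * ∫⁻ z in D k, ENNReal.ofReal |g z| ∂ν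
          ≤ ENNReal.ofReal (((2^k*ε')^(m+1))⁻¹) * (ENNReal.ofReal ((2^(k+1)*ε')^m) * M) :=
            mul_le_mul_right h3 _
        _ = ENNReal.ofReal (((2^k*ε')^(m+1))⁻¹ * (2^(k+1)*ε')^m) * M := by
            rw [← mul_assoc, ← ENNReal.ofReal_mul hinvnn]
        _ = ENNReal.ofReal ((2^m * ε'⁻¹) * ((1:ℝ)/2)^k) * M := by rw [hreal]
        _ = (ENNReal.ofReal (2^m * ε'⁻¹) * M) * (2⁻¹:ℝ≥0∞)^k := by
            rw [ENNReal.ofReal_mul (by positivity), ENNReal.ofReal_pow (by norm_num)]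
            rw [show ENNReal.ofReal ((1:ℝ)/2) = (2⁻¹:ℝ≥0∞) by
              rw [one_div, ENNReal.ofReal_inv_of_pos two_pos, ENNReal.ofReal_ofNat]]
            ring
    have hgeo : (∑' k, ∫⁻ z in D k, W z ∂ν) ≤ (ENNReal.ofReal (2^m * ε'⁻¹) * M) * 2 := by
      calc (∑' k, ∫⁻ z in D k, W z ∂ν)
          ≤ ∑' k : ℕ, (ENNReal.ofReal (2^m * ε'⁻¹) * M) * (2⁻¹:ℝ≥0∞)^k :=
            ENNReal.tsum_le_tsum hterm
        _ = (ENNReal.ofReal (2^m * ε'⁻¹) * M) * ∑' k : ℕ, (2⁻¹:ℝ≥0∞)^k :=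
            ENNReal.tsum_mul_left
        _ = (ENNReal.ofReal (2^m * ε'⁻¹) * M) * 2 := by
            rw [ENNReal.tsum_geometric]
            norm_num
    -- put everything together
    calc ENNReal.ofReal c₁ * ∫⁻ z in (closedBall x ε')ᶜ, W z ∂ν
        ≤ ENNReal.ofReal c₁ * ((ENNReal.ofReal (2^m * ε'⁻¹) * M) * 2) :=
          mul_le_mul_right (le_trans hsum hgeo) _
      _ = ENNReal.ofReal (c₁ * (2^m * ε'⁻¹) * 2) * M := by
          rw [ENNReal.ofReal_mul (by positivity : (0:ℝ) ≤ c₁ * (2^m * ε'⁻¹)),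
            ENNReal.ofReal_mul hc₁0]
          rw [ENNReal.ofReal_ofNat]
          ring
      _ ≤ A₁ * M := by
          refine mul_le_mul_left ?_ _
          rw [hA₁]
          refine ENNReal.ofReal_le_ofReal ?_
          have hdε : d * ε'⁻¹ ≤ 1 := by
            rw [← div_eq_mul_inv, div_le_one hε']
            rw [hε'def]; linarith
          have hkey : c₁ * (2^m * ε'⁻¹) * 2 = (C₁*2^(m+1)*2^(m+1)) * (d * ε'⁻¹) := by
            rw [hc₁, pow_succ (2:ℝ) m]; ring
          rw [hkey]
          calc (C₁*2^(m+1)*2^(m+1)) * (d * ε'⁻¹) ≤ (C₁*2^(m+1)*2^(m+1)) * 1 :=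
                mul_le_mul_of_nonneg_left hdε (by positivity)
            _ = C₁*2^(m+1)*2^(m+1) := mul_one _
  -- assemble
  have hTb : ENNReal.ofReal |trunc ν K ε' g x| ≤ T := by
    rw [hT, maximalOp]
    exact le_iSup₂ (f := fun ε (_ : 0 < ε) => ENNReal.ofReal |trunc ν K ε g x|) ε' hε'
  calc ENNReal.ofReal |trunc ν K ε g y|
      ≤ ENNReal.ofReal |trunc ν K ε' g x| + ∫⁻ z, ENNReal.ofReal |F z - G z| ∂ν := hsplit
    _ ≤ T + (A₀ * M + A₁ * M) := by
        rw [hdecomp]; exact add_le_add hTb (add_le_add hnear hfar)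
    _ ≤ (1 + A₀ + A₁) * (T + M) := by
        rw [add_mul, add_mul, one_mul, mul_add, mul_add]
        calc T + (A₀ * M + A₁ * M) ≤ (T + M) + (A₀ * M + A₁ * M) := by
              exact add_le_add (le_add_right le_rfl) le_rfl
          _ ≤ (T + M) + ((A₀ * T + A₀ * M) + (A₁ * T + A₁ * M)) := by
              refine add_le_add le_rfl (add_le_add ?_ ?_) <;> exact le_add_left le_rfl
          _ = T + M + (A₀ * T + A₀ * M) + (A₁ * T + A₁ * M) := by ring
end
end

section
/- Let n ≥ 2 and let P ⊂ ℝⁿ be a closed ball. Then there exist Lipschitz functions f₁, …, f_{2n} : ℝ^{n−1} → ℝ, rotations (linear isometries) R₁, …, R_{2n} of ℝⁿ, and pairwise disjoint Borel sets A₁, …, A_{2n} ⊂ ℝⁿ such that ℝⁿ∖P = A₁ ∪ ⋯ ∪ A_{2n}, and for each i: P ⊂ R_i(H_{f_i}^− ∪ C_{f_i}) and A_i ⊂ R_i(H_{f_i}^+). -/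
open MeasureTheory Metric ENNReal Filter Set Topology

noncomputable section

/-- The open region `H_f^-` below the graph of `f`. -/
def lowerSet {m : ℕ} (f : EuclideanSpace ℝ (Fin m) → ℝ) :
    Set (EuclideanSpace ℝ (Fin (m + 1))) :=
  {p | p (Fin.last m) < f (proj p)}

namespace S16

/-- Radial profile: spherical cap of radius `ρ` continued by its tangent cone of
slope `√m`. -/
def f0 (m : ℕ) (ρ r : ℝ) : ℝ :=
  if r ≤ Real.sqrt (m / (m + 1)) * ρ then Real.sqrt (ρ ^ 2 - r ^ 2)
  else Real.sqrt (m + 1) * ρ - Real.sqrt m * r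

variable {m : ℕ} {ρ h r a b : ℝ}

lemma sqm_sq : (Real.sqrt m) ^ 2 = (m : ℝ) := Real.sq_sqrt (Nat.cast_nonneg m)
lemma sqm1_sq : (Real.sqrt (m + 1)) ^ 2 = (m : ℝ) + 1 := by
  rw [Real.sq_sqrt]; positivity

lemma sqrt_frac : Real.sqrt ((m : ℝ) / (m + 1)) = Real.sqrt m / Real.sqrt (m + 1) :=
  Real.sqrt_div (Nat.cast_nonneg m) _

lemma le_r0 (hr : r ≤ Real.sqrt (m / (m + 1)) * ρ) :
    Real.sqrt (m + 1) * r ≤ Real.sqrt m * ρ := by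
  have h1 : (0:ℝ) < Real.sqrt (m + 1) := Real.sqrt_pos.2 (by positivity)
  rw [sqrt_frac, div_mul_eq_mul_div, le_div_iff₀ h1] at hr
  linarith [hr]

lemma lt_r0' (hr : Real.sqrt (m / (m + 1)) * ρ < r) :
    Real.sqrt m * ρ < Real.sqrt (m + 1) * r := by
  have h1 : (0:ℝ) < Real.sqrt (m + 1) := Real.sqrt_pos.2 (by positivity)
  rw [sqrt_frac, div_mul_eq_mul_div, div_lt_iff₀ h1] at hr
  linarith [hr]

/-- The tangent cone lies above the circle. -/
lemma lineE (hr : 0 ≤ r) (hrρ : r ≤ ρ) :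
    Real.sqrt (ρ ^ 2 - r ^ 2) ≤ Real.sqrt (m + 1) * ρ - Real.sqrt m * r := by
  have ha2 : (Real.sqrt (m+1)) ^ 2 = (m:ℝ)+1 := sqm1_sq
  have hb2 : (Real.sqrt m) ^ 2 = (m:ℝ) := sqm_sq
  have ha0 : 0 ≤ Real.sqrt ((m:ℝ)+1) := Real.sqrt_nonneg _
  have hb0 : 0 ≤ Real.sqrt (m:ℝ) := Real.sqrt_nonneg _
  have hba : Real.sqrt (m:ℝ) ≤ Real.sqrt ((m:ℝ)+1) := Real.sqrt_le_sqrt (by linarith)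
  have hρ : 0 ≤ ρ := le_trans hr hrρ
  have hRHS : 0 ≤ Real.sqrt (m + 1) * ρ - Real.sqrt m * r := by nlinarith
  calc Real.sqrt (ρ ^ 2 - r ^ 2)
      ≤ Real.sqrt ((Real.sqrt (m + 1) * ρ - Real.sqrt m * r) ^ 2) := by
        apply Real.sqrt_le_sqrt
        nlinarith [sq_nonneg (Real.sqrt m * ρ - Real.sqrt (m+1) * r)]
    _ = _ := Real.sqrt_sq hRHS

/-- Points of the closed ball are below the graph. -/
lemma f0_ball (hρ : 0 ≤ ρ) (hr : 0 ≤ r) (hball : h ^ 2 + r ^ 2 ≤ ρ ^ 2) :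
    h ≤ f0 m ρ r := by
  have hcirc : h ≤ Real.sqrt (ρ ^ 2 - r ^ 2) := by
    calc h ≤ |h| := le_abs_self h
      _ = Real.sqrt (h ^ 2) := (Real.sqrt_sq_eq_abs h).symm
      _ ≤ _ := Real.sqrt_le_sqrt (by linarith)
  unfold f0
  split
  · exact hcirc
  · refine hcirc.trans (lineE hr ?_)
    nlinarith [sq_nonneg (ρ - r)]

/-- Outside points in max-coordinate position are above the graph. -/
lemma f0_cover (hm : 1 ≤ m) (hh : 0 ≤ h) (hr : 0 ≤ r) (hrm : r ^ 2 ≤ m * h ^ 2)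
    (hout : ρ ^ 2 < h ^ 2 + r ^ 2 ∨ ρ < 0) : f0 m ρ r < h := by
  have hb2 : (Real.sqrt m) ^ 2 = (m:ℝ) := sqm_sq
  have ha2 : (Real.sqrt (m+1)) ^ 2 = (m:ℝ)+1 := sqm1_sq
  have ha0 : 0 ≤ Real.sqrt ((m:ℝ)+1) := Real.sqrt_nonneg _
  have hb0 : 0 ≤ Real.sqrt (m:ℝ) := Real.sqrt_nonneg _
  have hbpos : 0 < Real.sqrt (m:ℝ) :=
    Real.sqrt_pos.2 (by exact_mod_cast Nat.pos_of_ne_zero (by omega))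
  have hapos : 0 < Real.sqrt ((m:ℝ)+1) := Real.sqrt_pos.2 (by positivity)
  have hrh : r ≤ Real.sqrt m * h := by
    have h0 : r = Real.sqrt (r ^ 2) := (Real.sqrt_sq hr).symm
    rw [h0]
    calc Real.sqrt (r ^ 2) ≤ Real.sqrt ((Real.sqrt m * h)^2) :=
          Real.sqrt_le_sqrt (by nlinarith)
      _ = _ := Real.sqrt_sq (by positivity)
  unfold f0
  split
  · rename_i hcase
    have hρ0 : 0 ≤ ρ := by
      by_contra hneg
      push_neg at hneg
      have : Real.sqrt ((m:ℝ) / (m+1)) * ρ < 0 := by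
        apply mul_neg_of_pos_of_neg _ hneg
        apply Real.sqrt_pos.2
        positivity
      linarith
    have hout' : ρ ^ 2 < h ^ 2 + r ^ 2 := by
      rcases hout with h1 | h1
      · exact h1
      · linarith
    have hhpos : 0 < h := by
      rcases lt_or_eq_of_le hh with h1 | h1
      · exact h1
      · exfalso
        rw [← h1] at hout' hrm
        simp only [ne_eq, OfNat.ofNat_ne_zero, not_false_eq_true, zero_pow] at hrm hout'
        nlinarith [sq_nonneg ρ]
    rw [Real.sqrt_lt' hhpos]
    linarith
  · rename_i hcase
    push_neg at hcase
    have key := lt_r0' hcase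
    nlinarith [mul_le_mul_of_nonneg_left hrh hb0, mul_lt_mul_of_pos_left key hapos]

lemma rho_nonneg_of_r0 (ha : 0 ≤ a) (hr : a ≤ Real.sqrt (m / (m + 1)) * ρ) (hm : 1 ≤ m) :
    0 ≤ ρ := by
  have h1 : (0:ℝ) < Real.sqrt ((m:ℝ) / (m + 1)) := Real.sqrt_pos.2 (by
    apply div_pos
    · exact_mod_cast Nat.pos_of_ne_zero (by omega)
    · positivity)
  nlinarith

/-- `f0` is antitone on `[0, ∞)`. -/
lemma f0_anti (hm : 1 ≤ m) (ha : 0 ≤ a) (hab : a ≤ b) : f0 m ρ b ≤ f0 m ρ a := by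
  have hb2 : (Real.sqrt m) ^ 2 = (m:ℝ) := sqm_sq
  have ha2 : (Real.sqrt (m+1)) ^ 2 = (m:ℝ)+1 := sqm1_sq
  have ha0 : 0 ≤ Real.sqrt ((m:ℝ)+1) := Real.sqrt_nonneg _
  have hb0 : 0 ≤ Real.sqrt (m:ℝ) := Real.sqrt_nonneg _
  have hapos : 0 < Real.sqrt ((m:ℝ)+1) := Real.sqrt_pos.2 (by positivity)
  unfold f0
  split
  · rename_i hbr
    rw [if_pos (le_trans hab hbr)]
    apply Real.sqrt_le_sqrt
    nlinarith
  · rename_i hbr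
    push_neg at hbr
    split
    · rename_i har
      have hρ : 0 ≤ ρ := rho_nonneg_of_r0 ha har hm
      have k1 := lt_r0' hbr
      have k2 := le_r0 har
      have step1 : Real.sqrt (m+1) * (Real.sqrt (m + 1) * ρ - Real.sqrt m * b) ≤ ρ := by
        nlinarith [mul_le_mul_of_nonneg_left (le_of_lt k1) hb0]
      have hsq : 0 ≤ ρ ^ 2 - a ^ 2 := by nlinarith [mul_le_mul_of_nonneg_left k2 ha0]
      have step2 : ρ ≤ Real.sqrt (m+1) * Real.sqrt (ρ ^ 2 - a ^ 2) := by
        have h2 : (Real.sqrt (m+1) * Real.sqrt (ρ ^ 2 - a ^ 2)) ^ 2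
            = ((m:ℝ)+1) * (ρ^2 - a^2) := by
          rw [mul_pow, ha2, Real.sq_sqrt hsq]
        have h3 : ρ ^ 2 ≤ (Real.sqrt (m+1) * Real.sqrt (ρ ^ 2 - a ^ 2)) ^ 2 := by
          rw [h2]
          nlinarith [mul_le_mul_of_nonneg_left k2 ha0]
        have h4 : 0 ≤ Real.sqrt (m+1) * Real.sqrt (ρ ^ 2 - a ^ 2) := by positivity
        nlinarith
      nlinarith
    · rename_i har
      nlinarith

/-- One-sided Lipschitz bound for `f0`. -/
lemma f0_lipdec (hm : 1 ≤ m) (ha : 0 ≤ a) (hab : a ≤ b) :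
    f0 m ρ a - f0 m ρ b ≤ Real.sqrt m * (b - a) := by
  have hb2 : (Real.sqrt m) ^ 2 = (m:ℝ) := sqm_sq
  have ha2 : (Real.sqrt (m+1)) ^ 2 = (m:ℝ)+1 := sqm1_sq
  have ha0 : 0 ≤ Real.sqrt ((m:ℝ)+1) := Real.sqrt_nonneg _
  have hb0 : 0 ≤ Real.sqrt (m:ℝ) := Real.sqrt_nonneg _
  unfold f0
  rcases le_or_gt b (Real.sqrt (m / (m + 1)) * ρ) with hbr | hbr'
  · rw [if_pos hbr, if_pos (le_trans hab hbr)]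
    have hρ : 0 ≤ ρ := rho_nonneg_of_r0 (le_trans ha hab) hbr hm
    have k2 := le_r0 hbr
    have hsqb : 0 ≤ ρ ^ 2 - b ^ 2 := by nlinarith [mul_le_mul_of_nonneg_left k2 ha0]
    set t := Real.sqrt (ρ ^ 2 - b ^ 2) with ht
    have ht0 : 0 ≤ t := Real.sqrt_nonneg _
    have ht2 : t ^ 2 = ρ ^ 2 - b ^ 2 := Real.sq_sqrt hsqb
    have hbt : b ≤ Real.sqrt m * t := by
      have h3 : b ^ 2 ≤ (Real.sqrt m * t) ^ 2 := by
        rw [mul_pow, hb2, ht2]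
        nlinarith [mul_le_mul_of_nonneg_left k2 ha0]
      have h4 : 0 ≤ Real.sqrt m * t := by positivity
      nlinarith
    have key : Real.sqrt (ρ ^ 2 - a ^ 2) ≤ Real.sqrt m * (b - a) + t := by
      calc Real.sqrt (ρ ^ 2 - a ^ 2)
          ≤ Real.sqrt ((Real.sqrt m * (b - a) + t) ^ 2) := by
            apply Real.sqrt_le_sqrt
            nlinarith [mul_le_mul_of_nonneg_left hbt (sub_nonneg.2 hab), sq_nonneg (b - a)]
        _ = _ := Real.sqrt_sq (add_nonneg (mul_nonneg hb0 (sub_nonneg.2 hab)) ht0)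
    linarith
  · rw [if_neg (not_le.2 hbr')]
    rcases le_or_gt a (Real.sqrt (m / (m + 1)) * ρ) with har | har'
    · rw [if_pos har]
      have hρ : 0 ≤ ρ := rho_nonneg_of_r0 ha har hm
      have k2 := le_r0 har
      have haρ : a ≤ ρ := by
        have hba : Real.sqrt (m:ℝ) ≤ Real.sqrt ((m:ℝ)+1) := Real.sqrt_le_sqrt (by linarith)
        have hapos : 0 < Real.sqrt ((m:ℝ)+1) := Real.sqrt_pos.2 (by positivity)
        nlinarith [mul_le_mul_of_nonneg_right hba hρ]
      have := lineE (m := m) ha haρ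
      linarith
    · rw [if_neg (not_le.2 har')]
      linarith

lemma f0_lip (hm : 1 ≤ m) (ha : 0 ≤ a) (hb : 0 ≤ b) :
    |f0 m ρ a - f0 m ρ b| ≤ Real.sqrt m * |a - b| := by
  rcases le_total a b with hab | hab
  · rw [abs_of_nonneg (sub_nonneg.2 (f0_anti (ρ := ρ) hm ha hab)),
      abs_sub_comm a b, abs_of_nonneg (sub_nonneg.2 hab)]
    exact f0_lipdec hm ha hab
  · rw [abs_sub_comm, abs_of_nonneg (sub_nonneg.2 (f0_anti (ρ := ρ) hm hb hab)),
      abs_of_nonneg (sub_nonneg.2 hab)]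
    exact f0_lipdec hm hb hab

/-! ### Geometry -/

variable {m : ℕ}

lemma norm_sq_eq {k : ℕ} (w : EuclideanSpace ℝ (Fin k)) : ‖w‖ ^ 2 = ∑ i, (w i) ^ 2 := by
  rw [EuclideanSpace.norm_eq, Real.sq_sqrt (by positivity)]
  congr 1; ext i; rw [Real.norm_eq_abs, sq_abs]

lemma proj_norm_sq (w : EuclideanSpace ℝ (Fin (m + 1))) :
    ‖proj w‖ ^ 2 = ‖w‖ ^ 2 - (w (Fin.last m)) ^ 2 := by
  rw [norm_sq_eq, norm_sq_eq, Fin.sum_univ_castSucc]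
  simp [proj]

/-- The coordinate-swap isometry. -/
def swapIso (m : ℕ) (j : Fin (m + 1)) :
    EuclideanSpace ℝ (Fin (m + 1)) ≃ₗᵢ[ℝ] EuclideanSpace ℝ (Fin (m + 1)) :=
  LinearIsometryEquiv.piLpCongrLeft 2 ℝ ℝ (Equiv.swap j (Fin.last m))

/-- The rotation used in direction `(j, s)`. -/
def rot (m : ℕ) (j : Fin (m + 1)) (s : Bool) :
    EuclideanSpace ℝ (Fin (m + 1)) ≃ₗᵢ[ℝ] EuclideanSpace ℝ (Fin (m + 1)) :=
  if s then swapIso m j else (LinearIsometryEquiv.neg ℝ).trans (swapIso m j)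

lemma swapIso_symm_apply_last (j : Fin (m + 1)) (w : EuclideanSpace ℝ (Fin (m + 1))) :
    ((swapIso m j).symm w) (Fin.last m) = w j := by
  simp [swapIso, LinearIsometryEquiv.piLpCongrLeft_symm,
    LinearIsometryEquiv.piLpCongrLeft_apply, Equiv.piCongrLeft'_apply]

lemma rot_symm_apply_last (j : Fin (m + 1)) (s : Bool) (w : EuclideanSpace ℝ (Fin (m + 1))) :
    ((rot m j s).symm w) (Fin.last m) = if s then w j else -(w j) := by
  cases s
  · simp only [rot, Bool.false_eq_true, if_false, LinearIsometryEquiv.symm_trans,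
      LinearIsometryEquiv.trans_apply, swapIso_symm_apply_last]
    rw [LinearIsometryEquiv.symm_neg]
    have h1 : (LinearIsometryEquiv.neg ℝ) ((swapIso m j).symm w) = -((swapIso m j).symm w) := rfl
    have h2 : (-(swapIso m j).symm w) (Fin.last m) = -((swapIso m j).symm w (Fin.last m)) := rfl
    rw [h1, h2, swapIso_symm_apply_last]
  · simp [rot, swapIso_symm_apply_last]

/-- `proj` as a linear map. -/
def projL (m : ℕ) : EuclideanSpace ℝ (Fin (m + 1)) →ₗ[ℝ] EuclideanSpace ℝ (Fin m) where
  toFun := proj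
  map_add' _ _ := rfl
  map_smul' _ _ := rfl

/-- Last coordinate as a linear map. -/
def lastL (m : ℕ) : EuclideanSpace ℝ (Fin (m + 1)) →ₗ[ℝ] ℝ where
  toFun p := p (Fin.last m)
  map_add' _ _ := rfl
  map_smul' _ _ := rfl

lemma isOpen_upperSet {f : EuclideanSpace ℝ (Fin m) → ℝ} (hf : Continuous f) :
    IsOpen (upperSet f) :=
  isOpen_lt (hf.comp (projL m).continuous_of_finiteDimensional)
    (lastL m).continuous_of_finiteDimensional

lemma lower_union_graph (f : EuclideanSpace ℝ (Fin m) → ℝ) :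
    lowerSet f ∪ graphSet f = {p | p (Fin.last m) ≤ f (proj p)} := by
  ext p
  simp only [_root_.lowerSet, graphSet, Set.mem_union, Set.mem_setOf_eq, le_iff_lt_or_eq]

end S16

open S16 in
/-- For every closed ball `P ⊂ ℝⁿ` (`n = m + 1 ≥ 2`) there are `2n`
rotated Lipschitz graphs (given by Lipschitz functions `f i` and linear isometries `R i`)
and pairwise disjoint Borel sets `A i` such that `ℝⁿ∖P = ⋃ A i`, each
`P ⊆ R i (H_{f i}^- ∪ C_{f i})`, and each `A i ⊆ R i (H_{f i}^+)`. -/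
theorem statement16 (m : ℕ) (hm : 1 ≤ m)
    (c : EuclideanSpace ℝ (Fin (m + 1))) (ρ : ℝ) :
    ∃ (f : Fin (2 * (m + 1)) → EuclideanSpace ℝ (Fin m) → ℝ)
      (Lf : Fin (2 * (m + 1)) → NNReal)
      (R : Fin (2 * (m + 1)) →
        (EuclideanSpace ℝ (Fin (m + 1)) ≃ₗᵢ[ℝ] EuclideanSpace ℝ (Fin (m + 1))))
      (A : Fin (2 * (m + 1)) → Set (EuclideanSpace ℝ (Fin (m + 1)))),
      (∀ i, LipschitzWith (Lf i) (f i)) ∧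
      (∀ i, MeasurableSet (A i)) ∧
      (Pairwise fun i j => Disjoint (A i) (A j)) ∧
      ((closedBall c ρ)ᶜ = ⋃ i, A i) ∧
      (∀ i, closedBall c ρ ⊆ (R i) '' (lowerSet (f i) ∪ graphSet (f i))) ∧
      (∀ i, A i ⊆ (R i) '' upperSet (f i)) := by
  classical
  -- decode an index into a sign and a coordinate
  set dec : Fin (2 * (m + 1)) → Fin 2 × Fin (m + 1) := fun i => finProdFinEquiv.symm i with hdec
  set R : Fin (2 * (m + 1)) → ((EuclideanSpace ℝ (Fin (m + 1))) ≃ₗᵢ[ℝ] (EuclideanSpace ℝ (Fin (m + 1)))) :=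
    fun i => rot m (dec i).2 (decide ((dec i).1 = 0)) with hR
  set c' : Fin (2 * (m + 1)) → (EuclideanSpace ℝ (Fin (m + 1))) := fun i => (R i).symm c with hc'
  set fn : Fin (2 * (m + 1)) → EuclideanSpace ℝ (Fin m) → ℝ :=
    fun i x => c' i (Fin.last m) + f0 m ρ ‖x - proj (c' i)‖ with hfn
  -- the translated point in rotated coordinates
  set u : Fin (2 * (m + 1)) → (EuclideanSpace ℝ (Fin (m + 1))) → (EuclideanSpace ℝ (Fin (m + 1))) := fun i p => (R i).symm (p - c) with hu
  have hulast : ∀ i p, (u i p) (Fin.last m)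
      = (if decide ((dec i).1 = 0) then (p - c) ((dec i).2) else -((p - c) ((dec i).2))) := by
    intro i p
    rw [hu]
    exact rot_symm_apply_last _ _ _
  have hunorm : ∀ i p, ‖u i p‖ = ‖p - c‖ := by
    intro i p; exact (R i).symm.norm_map _
  -- key reformulations of the membership conditions
  have hsubapp : ∀ (a b : (EuclideanSpace ℝ (Fin (m + 1)))) (k : Fin (m + 1)), (a - b) k = a k - b k := fun _ _ _ => rfl
  have husub : ∀ i p, u i p = (R i).symm p - c' i := by
    intro i p
    show (R i).symm (p - c) = _
    rw [map_sub]
  have eq1 : ∀ i p, ((R i).symm p) (Fin.last m)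
      = u i p (Fin.last m) + c' i (Fin.last m) := by
    intro i p
    rw [husub, hsubapp]
    ring
  have eq2 : ∀ i p, fn i (proj ((R i).symm p)) = c' i (Fin.last m) + f0 m ρ ‖proj (u i p)‖ := by
    intro i p
    have h2 : proj ((R i).symm p) - proj (c' i) = proj (u i p) := by
      rw [husub]; rfl
    show c' i (Fin.last m) + f0 m ρ ‖proj ((R i).symm p) - proj (c' i)‖ = _
    rw [h2]
  have memUpper : ∀ i p, f0 m ρ ‖proj (u i p)‖ < u i p (Fin.last m) →
      p ∈ (R i) '' upperSet (fn i) := by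
    intro i p hp
    refine ⟨(R i).symm p, ?_, (R i).apply_symm_apply p⟩
    show fn i (proj ((R i).symm p)) < ((R i).symm p) (Fin.last m)
    rw [eq2, eq1 i p]
    linarith
  have memLower : ∀ i p, u i p (Fin.last m) ≤ f0 m ρ ‖proj (u i p)‖ →
      p ∈ (R i) '' (lowerSet (fn i) ∪ graphSet (fn i)) := by
    intro i p hp
    refine ⟨(R i).symm p, ?_, (R i).apply_symm_apply p⟩
    rw [lower_union_graph]
    show ((R i).symm p) (Fin.last m) ≤ fn i (proj ((R i).symm p))
    rw [eq2, eq1 i p]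
    linarith
  -- pythagoras for u
  have pyth : ∀ i p, ‖proj (u i p)‖ ^ 2 = ‖p - c‖ ^ 2 - (u i p (Fin.last m)) ^ 2 := by
    intro i p
    rw [proj_norm_sq, hunorm]
  -- covering of the complement of the ball
  have cover : ∀ p : (EuclideanSpace ℝ (Fin (m + 1))), p ∉ closedBall c ρ → ∃ i, p ∈ (R i) '' upperSet (fn i) := by
    intro p hp
    rw [mem_closedBall, not_le, dist_eq_norm] at hp
    obtain ⟨j, -, hj⟩ := Finset.exists_max_image Finset.univ
      (fun k => |(p - c) k|) ⟨Fin.last m, Finset.mem_univ _⟩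
    have hex : ∃ i, u i p (Fin.last m) = |(p - c) j| := by
      rcases le_or_gt 0 ((p - c) j) with h0 | h0
      · refine ⟨finProdFinEquiv ((0 : Fin 2), j), ?_⟩
        have hdeci : dec (finProdFinEquiv ((0 : Fin 2), j)) = ((0 : Fin 2), j) := by
          rw [hdec]; simp
        rw [hulast, hdeci]
        rw [if_pos (show decide ((((0 : Fin 2), j) : Fin 2 × Fin (m + 1)).1 = 0) = true
          from rfl)]
        exact (abs_of_nonneg h0).symm
      · refine ⟨finProdFinEquiv ((1 : Fin 2), j), ?_⟩
        have hdeci : dec (finProdFinEquiv ((1 : Fin 2), j)) = ((1 : Fin 2), j) := by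
          rw [hdec]; simp
        rw [hulast, hdeci]
        rw [if_neg (show ¬(decide ((((1 : Fin 2), j) : Fin 2 × Fin (m + 1)).1 = 0) = true)
          from Bool.false_ne_true)]
        exact (abs_of_neg h0).symm
    obtain ⟨i, hlast⟩ := hex
    refine ⟨i, ?_⟩
    apply memUpper
    set h := |(p - c) j| with hh
    set r := ‖proj (u i p)‖ with hr
    have hr0 : 0 ≤ r := norm_nonneg _
    have hh0 : 0 ≤ h := abs_nonneg _
    have hr2 : r ^ 2 = ‖p - c‖ ^ 2 - h ^ 2 := by rw [hr, pyth, hlast]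
    -- r² ≤ m h²
    have hsum : ‖p - c‖ ^ 2 = ∑ k, ((p - c) k) ^ 2 := norm_sq_eq _
    have hrm : r ^ 2 ≤ m * h ^ 2 := by
      have hsplit : ∑ k ∈ Finset.univ.erase j, ((p - c) k) ^ 2 + ((p - c) j) ^ 2
          = ∑ k, ((p - c) k) ^ 2 := Finset.sum_erase_add _ _ (Finset.mem_univ j)
      have hbound : ∑ k ∈ Finset.univ.erase j, ((p - c) k) ^ 2 ≤ m * h ^ 2 := by
        calc ∑ k ∈ Finset.univ.erase j, ((p - c) k) ^ 2
            ≤ ∑ _k ∈ Finset.univ.erase j, h ^ 2 := by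
              apply Finset.sum_le_sum
              intro k _
              rw [hh, ← sq_abs ((p - c) k)]
              exact pow_le_pow_left₀ (abs_nonneg _) (hj k (Finset.mem_univ k)) 2
          _ = m * h ^ 2 := by
              rw [Finset.sum_const, nsmul_eq_mul]
              congr 2
              rw [Finset.card_erase_of_mem (Finset.mem_univ j), Finset.card_univ,
                Fintype.card_fin]
              simp
      have hj2 : ((p - c) j) ^ 2 = h ^ 2 := (sq_abs _).symm
      rw [hr2, hsum, ← hsplit, hj2]
      linarith
    have hout : ρ ^ 2 < h ^ 2 + r ^ 2 ∨ ρ < 0 := by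
      rcases le_or_gt 0 ρ with h0 | h0
      · left
        have hlt : ρ ^ 2 < ‖p - c‖ ^ 2 := by
          apply pow_lt_pow_left₀ hp h0
          norm_num
        linarith [hlt, hr2]
      · right; exact h0
    rw [hlast]
    exact f0_cover hm hh0 hr0 hrm hout
  -- ball containment
  have hball : ∀ i, closedBall c ρ ⊆ (R i) '' (lowerSet (fn i) ∪ graphSet (fn i)) := by
    intro i p hp
    rw [mem_closedBall, dist_eq_norm] at hp
    have hρ0 : 0 ≤ ρ := le_trans (norm_nonneg _) hp
    apply memLower
    have hpy := pyth i p
    have hineq : (u i p (Fin.last m)) ^ 2 + ‖proj (u i p)‖ ^ 2 ≤ ρ ^ 2 := by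
      rw [hpy]
      have : ‖p - c‖ ^ 2 ≤ ρ ^ 2 := pow_le_pow_left₀ (norm_nonneg _) hp 2
      linarith
    exact f0_ball hρ0 (norm_nonneg _) hineq
  -- Lipschitz bound
  have hlip : ∀ i, LipschitzWith (Real.toNNReal (Real.sqrt m)) (fn i) := by
    intro i
    apply LipschitzWith.of_dist_le_mul
    intro x y
    rw [Real.coe_toNNReal _ (Real.sqrt_nonneg _), Real.dist_eq, hfn]
    simp only [add_sub_add_left_eq_sub]
    calc |f0 m ρ ‖x - proj (c' i)‖ - f0 m ρ ‖y - proj (c' i)‖|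
        ≤ Real.sqrt m * |‖x - proj (c' i)‖ - ‖y - proj (c' i)‖| :=
          f0_lip hm (norm_nonneg _) (norm_nonneg _)
      _ ≤ Real.sqrt m * dist x y := by
          apply mul_le_mul_of_nonneg_left _ (Real.sqrt_nonneg _)
          rw [dist_eq_norm]
          have := abs_norm_sub_norm_le (x - proj (c' i)) (y - proj (c' i))
          rwa [sub_sub_sub_cancel_right] at this
  -- the pieces
  set Bset : Fin (2 * (m + 1)) → Set (EuclideanSpace ℝ (Fin (m + 1))) :=
    fun i => (closedBall c ρ)ᶜ ∩ ((R i) '' upperSet (fn i)) with hBset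
  have hBmeas : ∀ i, MeasurableSet (Bset i) := by
    intro i
    apply MeasurableSet.inter
    · exact measurableSet_closedBall.compl
    · have himg : (R i) '' upperSet (fn i) = (R i).symm ⁻¹' upperSet (fn i) := by
        ext x
        constructor
        · rintro ⟨y, hy, rfl⟩
          simpa using hy
        · intro hx
          exact ⟨(R i).symm x, hx, (R i).apply_symm_apply x⟩
      rw [himg]
      exact (isOpen_upperSet ((hlip i).continuous)).measurableSet.preimage
        (R i).symm.continuous.measurable
  set Bn : ℕ → Set (EuclideanSpace ℝ (Fin (m + 1))) := fun n => if hn : n < 2 * (m + 1) then Bset ⟨n, hn⟩ else ∅ with hBn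
  have hBnmeas : ∀ n, MeasurableSet (Bn n) := by
    intro n
    by_cases hn : n < 2 * (m + 1)
    · simp only [hBn]
      rw [dif_pos hn]
      exact hBmeas _
    · simp only [hBn]
      rw [dif_neg hn]
      exact MeasurableSet.empty
  set A : Fin (2 * (m + 1)) → Set (EuclideanSpace ℝ (Fin (m + 1))) := fun i => disjointed Bn i.1 with hA
  have hAB : ∀ i, A i ⊆ Bset i := by
    intro i
    rw [hA]
    refine (disjointed_subset Bn i.1).trans ?_
    rw [hBn]
    simp only [i.isLt, dif_pos, Fin.eta]
    exact subset_rfl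
  refine ⟨fn, fun _ => Real.toNNReal (Real.sqrt m), R, A, hlip, ?_, ?_, ?_, hball, ?_⟩
  · intro i
    exact MeasurableSet.disjointed hBnmeas i.1
  · intro i j hij
    exact disjoint_disjointed Bn (fun hv => hij (Fin.ext hv))
  · -- the union
    apply Set.eq_of_subset_of_subset
    · intro p hp
      obtain ⟨i, hi⟩ := cover p hp
      have hpB : p ∈ ⋃ n, Bn n := by
        refine Set.mem_iUnion.2 ⟨i.1, ?_⟩
        rw [hBn]
        simp only [i.isLt, dif_pos, Fin.eta]
        exact ⟨hp, hi⟩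
      rw [← iUnion_disjointed] at hpB
      obtain ⟨n, hn⟩ := Set.mem_iUnion.1 hpB
      have hnlt : n < 2 * (m + 1) := by
        by_contra hge
        have hmem : p ∈ Bn n := disjointed_subset Bn n hn
        have hempty : Bn n = ∅ := by simp only [hBn]; rw [dif_neg hge]
        rw [hempty] at hmem
        exact hmem
      exact Set.mem_iUnion.2 ⟨⟨n, hnlt⟩, hn⟩
    · intro p hp
      obtain ⟨i, hi⟩ := Set.mem_iUnion.1 hp
      exact (hAB i hi).1
  · intro i p hp
    exact (hAB i hp).2
end
end
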